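/- (Rectangularized-state identities.) The following hold: ĥ^{(L)}_m N⁰ = L⁰, ĥ^{(L)}_m N¹ = L¹, ĥ^{(R)}_m N⁰ = R⁰, ĥ^{(R)}_m N¹ = R¹, ĥ^{(R)}_{m−1} L⁰ = γ² N¹, ĥ^{(R)}_{m−1} L¹ = −γ² N⁰ + (2γ²+J²) N¹, ĥ^{(L)}_{m+1} R⁰ = (2γ²+J²) N⁰ − γ² N¹, and ĥ^{(L)}_{m+1} R¹ = γ² N⁰. Consequently, (ĥ^{(R)}_{m−1} ĥ^{(L)}_m + ĥ^{(L)}_{m+1} ĥ^{(R)}_m) N^r = (2γ² + J²) N^r for r ∈ {0,1}. -/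

import Mathlib

open scoped BigOperators

namespace QuantumBreakdown

/-- Basis index: pairs of an occupation configuration and a spin configuration. -/
abbrev Cfg (M : ℕ) := (Fin M → Bool) × (Fin M → Bool)

/-- The Hilbert space `V_M`. -/
abbrev V (M : ℕ) := Cfg M → ℂ

/-- The basis vector `e_{n,s}`. -/
noncomputable def e (M : ℕ) (p : Cfg M) : V M := Pi.single p 1

/-- The linear operator determined by prescribed images of the basis vectors. -/
noncomputable def mkOp (M : ℕ) (f : Cfg M → V M) : V M →ₗ[ℂ] V M :=
  (Pi.basisFun ℂ (Cfg M)).constr ℂ f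

/-- The left site of edge `m`. -/
def sL (M : ℕ) (m : Fin (M - 1)) : Fin M := ⟨m.1, by have := m.2; omega⟩

/-- The right site of edge `m`. -/
def sR (M : ℕ) (m : Fin (M - 1)) : Fin M := ⟨m.1 + 1, by have := m.2; omega⟩

/-- Move a fermion from site `a` to site `b`. -/
def hop (M : ℕ) (n : Fin M → Bool) (a b : Fin M) : Fin M → Bool :=
  Function.update (Function.update n a false) b true

/-- The hopping term `H_γ`. -/
noncomputable def Hgam (M : ℕ) (γ : Fin (M - 1) → ℝ) : V M →ₗ[ℂ] V M :=
  mkOp M fun p =>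
    -∑ m : Fin (M - 1), (γ m : ℂ) •
      ((if p.1 (sL M m) = true ∧ p.1 (sR M m) = false then
          e M (hop M p.1 (sL M m) (sR M m), p.2) else 0)
        +
       (if p.1 (sR M m) = true ∧ p.1 (sL M m) = false then
          e M (hop M p.1 (sR M m) (sL M m), p.2) else 0))

/-- The breakdown interaction `H_J`. -/
noncomputable def HJop (M : ℕ) (J : Fin (M - 1) → ℝ) : V M →ₗ[ℂ] V M :=
  mkOp M fun p =>
    ∑ m : Fin (M - 1), (J m : ℂ) •
      ((if p.1 (sL M m) = true ∧ p.1 (sR M m) = false ∧ p.2 (sR M m) = false then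
          e M (hop M p.1 (sL M m) (sR M m), Function.update p.2 (sR M m) true) else 0)
        +
       (if p.1 (sR M m) = true ∧ p.1 (sL M m) = false ∧ p.2 (sR M m) = true then
          e M (hop M p.1 (sR M m) (sL M m), Function.update p.2 (sR M m) false) else 0))

/-- The on-site potential `H_μ`. -/
noncomputable def Hmu (M : ℕ) (μ : Fin M → ℝ) : V M →ₗ[ℂ] V M :=
  mkOp M fun p => (∑ m : Fin M, if p.1 m = true then (μ m : ℂ) else 0) • e M p

/-- Pauli `σ^x` at site `m`. -/
noncomputable def sigx (M : ℕ) (m : Fin M) : V M →ₗ[ℂ] V M :=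
  mkOp M fun p => e M (p.1, Function.update p.2 m (!p.2 m))

/-- Pauli `σ^y` at site `m`. -/
noncomputable def sigy (M : ℕ) (m : Fin M) : V M →ₗ[ℂ] V M :=
  mkOp M fun p =>
    (if p.2 m = true then Complex.I else -Complex.I) • e M (p.1, Function.update p.2 m (!p.2 m))

/-- Pauli `σ^z` at site `m`. -/
noncomputable def sigz (M : ℕ) (m : Fin M) : V M →ₗ[ℂ] V M :=
  mkOp M fun p => (if p.2 m = true then (1 : ℂ) else -1) • e M p

/-- The magnetic field term `H_h`. -/
noncomputable def Hh (M : ℕ) (hx hy hz : Fin M → ℝ) : V M →ₗ[ℂ] V M :=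
  ∑ m : Fin M, ((hx m : ℂ) • sigx M m + (hy m : ℂ) • sigy M m + (hz m : ℂ) • sigz M m)

/-- Number of occupied sites of an occupation configuration. -/
def nOcc (M : ℕ) (n : Fin M → Bool) : ℕ := (Finset.univ.filter fun m => n m = true).card

/-- The number operator `N`. -/
noncomputable def numOp (M : ℕ) : V M →ₗ[ℂ] V M :=
  mkOp M fun p => (nOcc M p.1 : ℂ) • e M p

/-- The charge-`Q` sector `W_Q`. -/
noncomputable def sector (M Q : ℕ) : Submodule ℂ (V M) :=
  Submodule.span ℂ { v | ∃ p : Cfg M, nOcc M p.1 = Q ∧ v = e M p }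

/-- The charge-`Q` sector with first spin up, `W_Q^↑`. -/
noncomputable def sectorUp (M : ℕ) (hM : 0 < M) (Q : ℕ) : Submodule ℂ (V M) :=
  Submodule.span ℂ { v | ∃ p : Cfg M, nOcc M p.1 = Q ∧ p.2 ⟨0, hM⟩ = true ∧ v = e M p }

end QuantumBreakdown

namespace QuantumBreakdown

/-- The right-hop term `ĥ^{(R)}_m` associated with edge `m` (moving a fermion
from site `m` to site `m+1`). -/
noncomputable def hRop (M : ℕ) (γ J : Fin (M - 1) → ℝ) (m : Fin (M - 1)) :
    V M →ₗ[ℂ] V M :=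
  mkOp M fun p =>
    if p.1 (sL M m) = true ∧ p.1 (sR M m) = false then
      (-(γ m : ℂ)) • e M (hop M p.1 (sL M m) (sR M m), p.2)
        + (if p.2 (sR M m) = false then
            (J m : ℂ) • e M (hop M p.1 (sL M m) (sR M m), Function.update p.2 (sR M m) true)
          else 0)
    else 0

/-- The left-hop term `ĥ^{(L)}_{m+1}` associated with edge `m` (moving a fermion
from site `m+1` to site `m`). -/
noncomputable def hLop (M : ℕ) (γ J : Fin (M - 1) → ℝ) (m : Fin (M - 1)) :
    V M →ₗ[ℂ] V M :=
  mkOp M fun p =>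
    if p.1 (sR M m) = true ∧ p.1 (sL M m) = false then
      (-(γ m : ℂ)) • e M (hop M p.1 (sR M m) (sL M m), p.2)
        + (if p.2 (sR M m) = true then
            (J m : ℂ) • e M (hop M p.1 (sR M m) (sL M m), Function.update p.2 (sR M m) false)
          else 0)
    else 0

end QuantumBreakdown


namespace QuantumBreakdown

lemma mkOp_e (M : ℕ) (f : Cfg M → V M) (p : Cfg M) : mkOp M f (e M p) = f p := by
  have h := (Pi.basisFun ℂ (Cfg M)).constr_basis ℂ f p
  rwa [Pi.basisFun_apply] at h

end QuantumBreakdown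

open QuantumBreakdown

/-- rectangularized-state identities. With uniform couplings
`γ, J`, a site `m = i+1` (so `2 ≤ m ≤ M−1`, i.e. `1 ≤ i` and `i+1 < M`) carrying
the fermion, and the singly rectangularized states `N⁰, N¹, L⁰, L¹, R⁰, R¹`
built on the three sites `m−1, m, m+1`:
`ĥ^{(L)}_m N⁰ = L⁰`, `ĥ^{(L)}_m N¹ = L¹`, `ĥ^{(R)}_m N⁰ = R⁰`, `ĥ^{(R)}_m N¹ = R¹`,
`ĥ^{(R)}_{m−1} L⁰ = γ² N¹`, `ĥ^{(R)}_{m−1} L¹ = −γ² N⁰ + (2γ²+J²) N¹`,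
`ĥ^{(L)}_{m+1} R⁰ = (2γ²+J²) N⁰ − γ² N¹`, `ĥ^{(L)}_{m+1} R¹ = γ² N⁰`; consequently
`(ĥ^{(R)}_{m−1} ĥ^{(L)}_m + ĥ^{(L)}_{m+1} ĥ^{(R)}_m) N^r = (2γ²+J²) N^r` for `r ∈ {0,1}`. -/
theorem rectangularized_state_identities (M : ℕ) (hM : 3 ≤ M) (γ J : ℝ)
    (i : ℕ) (h1 : 1 ≤ i) (h2 : i + 1 < M) (n s : Fin M → Bool)
    (hnm : n ⟨i, by omega⟩ = true) (hnl : n ⟨i - 1, by omega⟩ = false)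
    (hnr : n ⟨i + 1, by omega⟩ = false) :
    let γf : Fin (M - 1) → ℝ := fun _ => γ
    let Jf : Fin (M - 1) → ℝ := fun _ => J
    let el : Fin (M - 1) := ⟨i - 1, by omega⟩  -- edge m−1
    let er : Fin (M - 1) := ⟨i, by omega⟩      -- edge m
    let eab : Bool → Bool → V M := fun a b =>
      e M (n, Function.update (Function.update s ⟨i, by omega⟩ a) ⟨i + 1, h2⟩ b)
    let eLab : Bool → Bool → V M := fun a b =>
      e M (Function.update (Function.update n ⟨i, by omega⟩ false) ⟨i - 1, by omega⟩ true,
        Function.update (Function.update s ⟨i, by omega⟩ a) ⟨i + 1, h2⟩ b)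
    let eRab : Bool → Bool → V M := fun a b =>
      e M (Function.update (Function.update n ⟨i, by omega⟩ false) ⟨i + 1, h2⟩ true,
        Function.update (Function.update s ⟨i, by omega⟩ a) ⟨i + 1, h2⟩ b)
    let N0 : V M := (J : ℂ) • eab false false - (γ : ℂ) • eab false true
      + (γ : ℂ) • eab true false
    let N1 : V M := -((γ : ℂ) • eab false true) + (γ : ℂ) • eab true false
      + (J : ℂ) • eab true true
    let L0 : V M := ((γ : ℂ) ^ 2) • eLab false true - ((γ : ℂ) ^ 2) • eLab true false
    let L1 : V M := ((γ : ℂ) * J) • eLab false false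
      + ((γ : ℂ) ^ 2 + (J : ℂ) ^ 2) • eLab false true
      - ((γ : ℂ) ^ 2) • eLab true false - ((γ : ℂ) * J) • eLab true true
    let R0 : V M := -(((γ : ℂ) * J) • eRab false false)
      + ((γ : ℂ) ^ 2 + (J : ℂ) ^ 2) • eRab false true
      - ((γ : ℂ) ^ 2) • eRab true false + ((γ : ℂ) * J) • eRab true true
    let R1 : V M := ((γ : ℂ) ^ 2) • eRab false true - ((γ : ℂ) ^ 2) • eRab true false
    (hLop M γf Jf el N0 = L0) ∧
    (hLop M γf Jf el N1 = L1) ∧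
    (hRop M γf Jf er N0 = R0) ∧
    (hRop M γf Jf er N1 = R1) ∧
    (hRop M γf Jf el L0 = ((γ : ℂ) ^ 2) • N1) ∧
    (hRop M γf Jf el L1 = -(((γ : ℂ) ^ 2) • N0) + (2 * (γ : ℂ) ^ 2 + (J : ℂ) ^ 2) • N1) ∧
    (hLop M γf Jf er R0 = (2 * (γ : ℂ) ^ 2 + (J : ℂ) ^ 2) • N0 - ((γ : ℂ) ^ 2) • N1) ∧
    (hLop M γf Jf er R1 = ((γ : ℂ) ^ 2) • N0) ∧
    ((hRop M γf Jf el ∘ₗ hLop M γf Jf el + hLop M γf Jf er ∘ₗ hRop M γf Jf er) N0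
      = (2 * (γ : ℂ) ^ 2 + (J : ℂ) ^ 2) • N0) ∧
    ((hRop M γf Jf el ∘ₗ hLop M γf Jf el + hLop M γf Jf er ∘ₗ hRop M γf Jf er) N1
      = (2 * (γ : ℂ) ^ 2 + (J : ℂ) ^ 2) • N1) := by

  intro γf Jf el er eab eLab eRab N0 N1 L0 L1 R0 R1
  have hi : i < M := by omega
  have hi0 : i - 1 < M := by omega
  have h01 : (⟨i - 1, hi0⟩ : Fin M) ≠ ⟨i, hi⟩ := by
    simp only [ne_eq, Fin.mk.injEq]; omega
  have h12 : (⟨i, hi⟩ : Fin M) ≠ ⟨i + 1, h2⟩ := by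
    simp only [ne_eq, Fin.mk.injEq]; omega
  have h02 : (⟨i - 1, hi0⟩ : Fin M) ≠ ⟨i + 1, h2⟩ := by
    simp only [ne_eq, Fin.mk.injEq]; omega
  have hsRel : sR M el = ⟨i, hi⟩ := by
    apply Fin.ext
    show i - 1 + 1 = i
    omega
  have hsLel : sL M el = ⟨i - 1, hi0⟩ := rfl
  have hsLer : sL M er = ⟨i, hi⟩ := rfl
  have hsRer : sR M er = ⟨i + 1, h2⟩ := rfl
  -- value of the eab-spin at site i and i+1
  have hσ1 : ∀ a b : Bool,
      Function.update (Function.update s ⟨i, hi⟩ a) ⟨i + 1, h2⟩ b ⟨i, hi⟩ = a := by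
    intro a b
    rw [Function.update_of_ne h12, Function.update_self]
  have hσ2 : ∀ a b : Bool,
      Function.update (Function.update s ⟨i, hi⟩ a) ⟨i + 1, h2⟩ b ⟨i + 1, h2⟩ = b := by
    intro a b
    rw [Function.update_self]
  have hupd1 : ∀ a b c : Bool,
      Function.update (Function.update (Function.update s ⟨i, hi⟩ a) ⟨i + 1, h2⟩ b) ⟨i, hi⟩ c
        = Function.update (Function.update s ⟨i, hi⟩ c) ⟨i + 1, h2⟩ b := by
    intro a b c
    rw [Function.update_comm h12.symm, Function.update_idem]
  have hupd2 : ∀ a b c : Bool,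
      Function.update (Function.update (Function.update s ⟨i, hi⟩ a) ⟨i + 1, h2⟩ b) ⟨i + 1, h2⟩ c
        = Function.update (Function.update s ⟨i, hi⟩ a) ⟨i + 1, h2⟩ c := by
    intro a b c
    rw [Function.update_idem]
  have hbackL : hop M (Function.update (Function.update n ⟨i, hi⟩ false) ⟨i - 1, hi0⟩ true)
      ⟨i - 1, hi0⟩ ⟨i, hi⟩ = n := by
    funext x
    simp only [hop, Function.update_apply]
    by_cases hx1 : x = (⟨i, hi⟩ : Fin M)
    · subst hx1; simp [h01.symm, hnm]
    · by_cases hx0 : x = (⟨i - 1, hi0⟩ : Fin M)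
      · subst hx0; simp [hx1, hnl]
      · simp [hx1, hx0]
  have hbackR : hop M (Function.update (Function.update n ⟨i, hi⟩ false) ⟨i + 1, h2⟩ true)
      ⟨i + 1, h2⟩ ⟨i, hi⟩ = n := by
    funext x
    simp only [hop, Function.update_apply]
    by_cases hx1 : x = (⟨i, hi⟩ : Fin M)
    · subst hx1; simp [h12, hnm]
    · by_cases hx2 : x = (⟨i + 1, h2⟩ : Fin M)
      · subst hx2; simp [hx1, hnr]
      · simp [hx1, hx2]
  -- action lemmas
  have hLe : ∀ a b : Bool,
      hLop M γf Jf el (eab a b)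
        = (-(γ : ℂ)) • eLab a b + (if a = true then (J : ℂ) • eLab false b else 0) := by
    intro a b
    show hLop M γf Jf el
        (e M (n, Function.update (Function.update s ⟨i, hi⟩ a) ⟨i + 1, h2⟩ b)) = _
    rw [hLop, mkOp_e]
    dsimp only
    rw [hsRel]
    rw [show sL M el = (⟨i - 1, hi0⟩ : Fin M) from rfl]
    rw [if_pos (⟨hnm, hnl⟩ : _ ∧ _)]
    rw [hupd1]
    simp only [hσ1]
    rfl
  have hRe : ∀ a b : Bool,
      hRop M γf Jf er (eab a b)
        = (-(γ : ℂ)) • eRab a b + (if b = false then (J : ℂ) • eRab a true else 0) := by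
    intro a b
    show hRop M γf Jf er
        (e M (n, Function.update (Function.update s ⟨i, hi⟩ a) ⟨i + 1, h2⟩ b)) = _
    rw [hRop, mkOp_e]
    dsimp only
    rw [show sL M er = (⟨i, hi⟩ : Fin M) from rfl]
    rw [show sR M er = (⟨i + 1, h2⟩ : Fin M) from rfl]
    rw [if_pos (⟨hnm, hnr⟩ : _ ∧ _)]
    rw [hupd2]
    simp only [hσ2]
    rfl
  have hRL : ∀ a b : Bool,
      hRop M γf Jf el (eLab a b)
        = (-(γ : ℂ)) • eab a b + (if a = false then (J : ℂ) • eab true b else 0) := by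
    intro a b
    show hRop M γf Jf el
        (e M (Function.update (Function.update n ⟨i, hi⟩ false) ⟨i - 1, hi0⟩ true,
          Function.update (Function.update s ⟨i, hi⟩ a) ⟨i + 1, h2⟩ b)) = _
    rw [hRop, mkOp_e]
    dsimp only
    rw [hsRel]
    rw [show sL M el = (⟨i - 1, hi0⟩ : Fin M) from rfl]
    rw [if_pos (⟨by rw [Function.update_self],
      by rw [Function.update_of_ne h01.symm, Function.update_self]⟩ : _ ∧ _)]
    rw [hupd1, hbackL]
    simp only [hσ1]
    rfl
  have hLR : ∀ a b : Bool,
      hLop M γf Jf er (eRab a b)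
        = (-(γ : ℂ)) • eab a b + (if b = true then (J : ℂ) • eab a false else 0) := by
    intro a b
    show hLop M γf Jf er
        (e M (Function.update (Function.update n ⟨i, hi⟩ false) ⟨i + 1, h2⟩ true,
          Function.update (Function.update s ⟨i, hi⟩ a) ⟨i + 1, h2⟩ b)) = _
    rw [hLop, mkOp_e]
    dsimp only
    rw [show sL M er = (⟨i, hi⟩ : Fin M) from rfl]
    rw [show sR M er = (⟨i + 1, h2⟩ : Fin M) from rfl]
    rw [if_pos (⟨by rw [Function.update_self],
      by rw [Function.update_of_ne h12, Function.update_self]⟩ : _ ∧ _)]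
    rw [hupd2, hbackR]
    simp only [hσ2]
    rfl
  have H1 : hLop M γf Jf el N0 = L0 := by
    show hLop M γf Jf el
        ((J : ℂ) • eab false false - (γ : ℂ) • eab false true + (γ : ℂ) • eab true false) = _
    rw [map_add, map_sub, map_smul, map_smul, map_smul, hLe, hLe, hLe]
    show _ = ((γ : ℂ) ^ 2) • eLab false true - ((γ : ℂ) ^ 2) • eLab true false
    simp only [if_true, if_false, Bool.false_eq_true, if_neg, reduceIte]
    module
  have H2 : hLop M γf Jf el N1 = L1 := by
    show hLop M γf Jf el
        (-((γ : ℂ) • eab false true) + (γ : ℂ) • eab true false + (J : ℂ) • eab true true) = _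
    rw [map_add, map_add, map_neg, map_smul, map_smul, map_smul, hLe, hLe, hLe]
    show _ = ((γ : ℂ) * J) • eLab false false
      + ((γ : ℂ) ^ 2 + (J : ℂ) ^ 2) • eLab false true
      - ((γ : ℂ) ^ 2) • eLab true false - ((γ : ℂ) * J) • eLab true true
    simp only [if_true, if_false, Bool.false_eq_true, if_neg, reduceIte]
    module
  have H3 : hRop M γf Jf er N0 = R0 := by
    show hRop M γf Jf er
        ((J : ℂ) • eab false false - (γ : ℂ) • eab false true + (γ : ℂ) • eab true false) = _
    rw [map_add, map_sub, map_smul, map_smul, map_smul, hRe, hRe, hRe]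
    show _ = -(((γ : ℂ) * J) • eRab false false)
      + ((γ : ℂ) ^ 2 + (J : ℂ) ^ 2) • eRab false true
      - ((γ : ℂ) ^ 2) • eRab true false + ((γ : ℂ) * J) • eRab true true
    simp only [if_true, if_false, Bool.true_eq_false, if_neg, reduceIte]
    module
  have H4 : hRop M γf Jf er N1 = R1 := by
    show hRop M γf Jf er
        (-((γ : ℂ) • eab false true) + (γ : ℂ) • eab true false + (J : ℂ) • eab true true) = _
    rw [map_add, map_add, map_neg, map_smul, map_smul, map_smul, hRe, hRe, hRe]
    show _ = ((γ : ℂ) ^ 2) • eRab false true - ((γ : ℂ) ^ 2) • eRab true false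
    simp only [if_true, if_false, Bool.true_eq_false, if_neg, reduceIte]
    module
  have H5 : hRop M γf Jf el L0 = ((γ : ℂ) ^ 2) • N1 := by
    show hRop M γf Jf el
        (((γ : ℂ) ^ 2) • eLab false true - ((γ : ℂ) ^ 2) • eLab true false) = _
    rw [map_sub, map_smul, map_smul, hRL, hRL]
    show _ = ((γ : ℂ) ^ 2) • (-((γ : ℂ) • eab false true) + (γ : ℂ) • eab true false
      + (J : ℂ) • eab true true)
    simp only [if_true, if_false, Bool.true_eq_false, if_neg, reduceIte]
    module
  have H6 : hRop M γf Jf el L1 = -(((γ : ℂ) ^ 2) • N0)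
      + (2 * (γ : ℂ) ^ 2 + (J : ℂ) ^ 2) • N1 := by
    show hRop M γf Jf el
        (((γ : ℂ) * J) • eLab false false
          + ((γ : ℂ) ^ 2 + (J : ℂ) ^ 2) • eLab false true
          - ((γ : ℂ) ^ 2) • eLab true false - ((γ : ℂ) * J) • eLab true true) = _
    rw [map_sub, map_sub, map_add, map_smul, map_smul, map_smul, map_smul, hRL, hRL, hRL, hRL]
    show _ = -(((γ : ℂ) ^ 2) • ((J : ℂ) • eab false false - (γ : ℂ) • eab false true
        + (γ : ℂ) • eab true false))
      + (2 * (γ : ℂ) ^ 2 + (J : ℂ) ^ 2) • (-((γ : ℂ) • eab false true)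
        + (γ : ℂ) • eab true false + (J : ℂ) • eab true true)
    simp only [if_true, if_false, Bool.true_eq_false, if_neg, reduceIte]
    module
  have H7 : hLop M γf Jf er R0 = (2 * (γ : ℂ) ^ 2 + (J : ℂ) ^ 2) • N0
      - ((γ : ℂ) ^ 2) • N1 := by
    show hLop M γf Jf er
        (-(((γ : ℂ) * J) • eRab false false)
          + ((γ : ℂ) ^ 2 + (J : ℂ) ^ 2) • eRab false true
          - ((γ : ℂ) ^ 2) • eRab true false + ((γ : ℂ) * J) • eRab true true) = _
    rw [map_add, map_sub, map_add, map_neg, map_smul, map_smul, map_smul, map_smul,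
      hLR, hLR, hLR, hLR]
    show _ = (2 * (γ : ℂ) ^ 2 + (J : ℂ) ^ 2) • ((J : ℂ) • eab false false
        - (γ : ℂ) • eab false true + (γ : ℂ) • eab true false)
      - ((γ : ℂ) ^ 2) • (-((γ : ℂ) • eab false true) + (γ : ℂ) • eab true false
        + (J : ℂ) • eab true true)
    simp only [if_true, if_false, Bool.false_eq_true, if_neg, reduceIte]
    module
  have H8 : hLop M γf Jf er R1 = ((γ : ℂ) ^ 2) • N0 := by
    show hLop M γf Jf er
        (((γ : ℂ) ^ 2) • eRab false true - ((γ : ℂ) ^ 2) • eRab true false) = _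
    rw [map_sub, map_smul, map_smul, hLR, hLR]
    show _ = ((γ : ℂ) ^ 2) • ((J : ℂ) • eab false false - (γ : ℂ) • eab false true
      + (γ : ℂ) • eab true false)
    simp only [if_true, if_false, Bool.false_eq_true, if_neg, reduceIte]
    module
  have H9 : (hRop M γf Jf el ∘ₗ hLop M γf Jf el + hLop M γf Jf er ∘ₗ hRop M γf Jf er) N0
      = (2 * (γ : ℂ) ^ 2 + (J : ℂ) ^ 2) • N0 := by
    rw [LinearMap.add_apply, LinearMap.comp_apply, LinearMap.comp_apply, H1, H3, H5, H7]
    module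
  have H10 : (hRop M γf Jf el ∘ₗ hLop M γf Jf el + hLop M γf Jf er ∘ₗ hRop M γf Jf er) N1
      = (2 * (γ : ℂ) ^ 2 + (J : ℂ) ^ 2) • N1 := by
    rw [LinearMap.add_apply, LinearMap.comp_apply, LinearMap.comp_apply, H2, H4, H6, H8]
    module
  exact ⟨H1, H2, H3, H4, H5, H6, H7, H8, H9, H10⟩
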